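/- Let X : [0,t] → ℝ be continuous with X(0) = 0, and set t_0 = sup{ s ∈ [0,t] : X(s) = inf_{0≤u≤s} X(u) }. Then for all u ∈ [0, t_0], one has inf_{u≤s≤t} ( X(s) − 2 inf_{0≤w≤s} X(w) ) = − inf_{0≤v≤u} X(v). -/

import Mathlib

open Set


/-- Lemma 2.5 of Biane–Bougerol–O'Connell: if `X : [0,t] → ℝ` is continuous with
`X 0 = 0` and `t₀` is the last time at which `X` achieves its running infimum, then
for all `u ∈ [0, t₀]`,
`inf_{u ≤ s ≤ t} (X s − 2 inf_{0 ≤ w ≤ s} X w) = − inf_{0 ≤ v ≤ u} X v`. -/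
theorem pitman_aux_lemma
    (t : ℝ) (ht : 0 < t) (X : ℝ → ℝ)
    (hX : ContinuousOn X (Set.Icc 0 t)) (hX0 : X 0 = 0) :
    ∀ u ∈ Set.Icc (0 : ℝ)
        (sSup {s | s ∈ Set.Icc 0 t ∧ X s = sInf (X '' Set.Icc 0 s)}),
      sInf ((fun s => X s - 2 * sInf (X '' Set.Icc 0 s)) '' Set.Icc u t)
        = -sInf (X '' Set.Icc 0 u) := by
  have hne : ∀ s : ℝ, 0 ≤ s → (X '' Icc 0 s).Nonempty :=
    fun s hs => ⟨X 0, mem_image_of_mem X ⟨le_refl 0, hs⟩⟩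
  have hbdd : ∀ s : ℝ, s ≤ t → BddBelow (X '' Icc 0 s) := by
    intro s hst
    exact (isCompact_Icc.image_of_continuousOn
      (hX.mono (Icc_subset_Icc_right hst))).bddBelow
  have hIle : ∀ s, 0 ≤ s → s ≤ t → ∀ w, 0 ≤ w → w ≤ s →
      sInf (X '' Icc 0 s) ≤ X w :=
    fun s _ hst w hw0 hws => csInf_le (hbdd s hst) (mem_image_of_mem X ⟨hw0, hws⟩)
  have hImono : ∀ a b : ℝ, 0 ≤ a → a ≤ b → b ≤ t →
      sInf (X '' Icc 0 b) ≤ sInf (X '' Icc 0 a) :=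
    fun a b ha0 hab hbt => csInf_le_csInf (hbdd b hbt) (hne a ha0)
      (image_mono (f := X) (Icc_subset_Icc_right hab))
  have hIX : ∀ s, 0 ≤ s → s ≤ t → sInf (X '' Icc 0 s) ≤ X s :=
    fun s h0 h1 => hIle s h0 h1 s h0 le_rfl
  have hcont : ∀ b ∈ Icc (0:ℝ) t, ∀ ε > 0, ∃ δ > 0, ∀ a ∈ Icc (0:ℝ) t,
      dist a b < δ → dist (X a) (X b) < ε := Metric.continuousOn_iff.mp hX
  set T : Set ℝ := {s | s ∈ Set.Icc 0 t ∧ X s = sInf (X '' Set.Icc 0 s)} with hTdef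
  have h0T : (0:ℝ) ∈ T := by
    refine ⟨⟨le_rfl, ht.le⟩, ?_⟩
    simp
  have hTbdd : BddAbove T := ⟨t, fun s hs => hs.1.2⟩
  have hTne : T.Nonempty := ⟨0, h0T⟩
  intro u hu
  set t₀ := sSup T with ht₀def
  have ht₀0 : 0 ≤ t₀ := le_csSup hTbdd h0T
  have ht₀t : t₀ ≤ t := csSup_le hTne fun s hs => hs.1.2
  have hu0 : 0 ≤ u := hu.1
  have hut₀ : u ≤ t₀ := hu.2
  have hut : u ≤ t := hut₀.trans ht₀t
  set m := sInf (X '' Set.Icc 0 u) with hm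
  -- Step A: X t₀ = I t₀
  have hXt₀ : X t₀ = sInf (X '' Icc 0 t₀) := by
    refine le_antisymm ?_ (hIX _ ht₀0 ht₀t)
    refine le_of_forall_pos_le_add fun ε hε => ?_
    obtain ⟨δ, hδ, hd⟩ := hcont t₀ ⟨ht₀0, ht₀t⟩ (ε/2) (by positivity)
    obtain ⟨a, haT, hta⟩ := exists_lt_of_lt_csSup hTne
      (show t₀ - δ < t₀ by linarith)
    have hat₀ : a ≤ t₀ := le_csSup hTbdd haT
    obtain ⟨haI, haX⟩ := haT
    have h1 : dist (X a) (X t₀) < ε/2 := hd a haI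
      (by rw [Real.dist_eq, abs_lt]; constructor <;> linarith)
    rw [Real.dist_eq, abs_lt] at h1
    have h2 : X t₀ - ε ≤ sInf (X '' Icc 0 t₀) := by
      apply le_csInf (hne _ ht₀0)
      rintro y ⟨w, ⟨hw0, hwt⟩, rfl⟩
      rcases le_or_gt w a with hwa | hwa
      · have h3 : sInf (X '' Icc 0 a) ≤ X w := hIle a haI.1 haI.2 w hw0 hwa
        linarith
      · have h5 : dist (X w) (X t₀) < ε/2 :=
          hd w ⟨hw0, hwt.trans ht₀t⟩
            (by rw [Real.dist_eq, abs_lt]; constructor <;> linarith)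
        rw [Real.dist_eq, abs_lt] at h5
        linarith
    linarith
  -- Step B: the set C and its supremum s₁
  set C : Set ℝ := {s | s ∈ Icc u t ∧ ∀ w, u ≤ w → w ≤ s → m ≤ X w} with hCdef
  have hmu : m ≤ X u := hIX u hu0 hut
  have huC : u ∈ C := ⟨⟨le_rfl, hut⟩, fun w hw1 hw2 => by
    have hwu : w = u := le_antisymm hw2 hw1
    rw [hwu]; exact hmu⟩
  have hCbdd : BddAbove C := ⟨t, fun s hs => hs.1.2⟩
  have hCne : C.Nonempty := ⟨u, huC⟩
  set s₁ := sSup C with hs₁def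
  have hus₁ : u ≤ s₁ := le_csSup hCbdd huC
  have hs₁t : s₁ ≤ t := csSup_le hCne fun s hs => hs.1.2
  have hs₁0 : 0 ≤ s₁ := hu0.trans hus₁
  have hCseg : ∀ w, u ≤ w → w < s₁ → m ≤ X w := by
    intro w hw1 hw2
    obtain ⟨a, haC, hwa⟩ := exists_lt_of_lt_csSup hCne hw2
    exact haC.2 w hw1 hwa.le
  have hXs₁ : m ≤ X s₁ := by
    rcases eq_or_lt_of_le hus₁ with h | h
    · rw [← h]; exact hmu
    · refine le_of_forall_pos_le_add fun ε hε => ?_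
      obtain ⟨δ, hδ, hd⟩ := hcont s₁ ⟨hs₁0, hs₁t⟩ ε hε
      obtain ⟨a, haC, hba⟩ := exists_lt_of_lt_csSup hCne
        (show max u (s₁ - δ) < s₁ by rw [max_lt_iff]; exact ⟨h, by linarith⟩)
      have has₁ : a ≤ s₁ := le_csSup hCbdd haC
      have hsd : s₁ - δ ≤ max u (s₁ - δ) := le_max_right _ _
      have h1 : dist (X a) (X s₁) < ε := hd a ⟨hu0.trans haC.1.1, haC.1.2⟩
        (by rw [Real.dist_eq, abs_lt]; constructor <;> linarith)
      rw [Real.dist_eq, abs_lt] at h1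
      have h2 : m ≤ X a := haC.2 a haC.1.1 le_rfl
      linarith
  have hIs₁ : sInf (X '' Icc 0 s₁) = m := by
    refine le_antisymm (hImono u s₁ hu0 hus₁ hs₁t) ?_
    apply le_csInf (hne _ hs₁0)
    rintro y ⟨w, ⟨hw0, hws⟩, rfl⟩
    rcases le_or_gt w u with hwu | hwu
    · exact hIle u hu0 hut w hw0 hwu
    · rcases eq_or_lt_of_le hws with he | hlt
      · rw [he]; exact hXs₁
      · exact hCseg w hwu.le hlt
  -- X t₀ ≤ m
  have hXt₀le : X t₀ ≤ m := by
    rw [hXt₀]; exact hImono u t₀ hu0 hut₀ ht₀t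
  -- produce the witness point p
  have hwitness : ∃ p, u ≤ p ∧ p ≤ t ∧ X p = m ∧ sInf (X '' Icc 0 p) = m := by
    rcases eq_or_lt_of_le hXt₀le with hcase | hcase
    · exact ⟨t₀, hut₀, ht₀t, hcase, by rw [← hXt₀]; exact hcase⟩
    · have hs₁t₀ : s₁ < t₀ := by
        by_contra hc
        push_neg at hc
        rcases eq_or_lt_of_le hc with he | hlt
        · rw [← he] at hXs₁; linarith
        · have := hCseg t₀ hut₀ hlt; linarith
      have hXs₁le : X s₁ ≤ m := by
        refine le_of_forall_pos_le_add fun ε hε => ?_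
        obtain ⟨δ, hδ, hd⟩ := hcont s₁ ⟨hs₁0, hs₁t⟩ ε hε
        set s₂ := min (s₁ + δ/2) t₀ with hs₂def
        have hs₂1 : s₁ < s₂ := lt_min (by linarith) hs₁t₀
        have hs₂t : s₂ ≤ t := (min_le_right _ _).trans ht₀t
        have hs₂u : u ≤ s₂ := hus₁.trans hs₂1.le
        have hs₂C : s₂ ∉ C := fun hmem => absurd (le_csSup hCbdd hmem) (not_le.mpr hs₂1)
        have hw : ∃ w, u ≤ w ∧ w ≤ s₂ ∧ X w < m := by
          by_contra hc
          push_neg at hc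
          exact hs₂C ⟨⟨hs₂u, hs₂t⟩, fun w h1 h2 => hc w h1 h2⟩
        obtain ⟨w, hw1, hw2, hw3⟩ := hw
        have hws₁ : s₁ < w := by
          rcases lt_trichotomy w s₁ with hh | hh | hh
          · have := hCseg w hw1 hh; linarith
          · rw [hh] at hw3; linarith
          · exact hh
        have hs₂le : s₂ ≤ s₁ + δ/2 := min_le_left _ _
        have h1 : dist (X w) (X s₁) < ε := hd w ⟨hu0.trans hw1, hw2.trans hs₂t⟩
          (by rw [Real.dist_eq, abs_lt]; constructor <;> linarith)
        rw [Real.dist_eq, abs_lt] at h1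
        linarith
      exact ⟨s₁, hus₁, hs₁t, le_antisymm hXs₁le hXs₁, hIs₁⟩
  obtain ⟨p, hpu, hpt, hXp, hIp⟩ := hwitness
  have hlb : ∀ y ∈ (fun s => X s - 2 * sInf (X '' Icc 0 s)) '' Icc u t, -m ≤ y := by
    rintro y ⟨s, ⟨hus, hst⟩, rfl⟩
    have h1 : sInf (X '' Icc 0 s) ≤ X s := hIX s (hu0.trans hus) hst
    have h2 : sInf (X '' Icc 0 s) ≤ m := hImono u s hu0 hus hst
    simp only
    linarith
  have hmem : (-m : ℝ) ∈ (fun s => X s - 2 * sInf (X '' Icc 0 s)) '' Icc u t := by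
    refine ⟨p, ⟨hpu, hpt⟩, ?_⟩
    simp only
    rw [hXp, hIp]; ring
  exact le_antisymm (csInf_le ⟨-m, hlb⟩ hmem) (le_csInf ⟨-m, hmem⟩ hlb)
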